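/- For all real a > 0, b > 0, and φ > 0, the three-parameter beta density integrates to one: ∫₀¹ (Γ(a+b)/(Γ(a)Γ(b))) · φ^b · x^(b−1) · (1−x)^(a−1) · (1+(φ−1)x)^(−(a+b)) dx = 1. -/

import Mathlib

open MeasureTheory Real

/-- The three-parameter beta (TPB) density with parameters `a`, `b`, `φ`. -/
noncomputable def tpb (a b φ x : ℝ) : ℝ :=
  (Real.Gamma (a + b) / (Real.Gamma a * Real.Gamma b)) * φ ^ b * x ^ (b - 1) *
    (1 - x) ^ (a - 1) * (1 + (φ - 1) * x) ^ (-(a + b))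

/-- The real Beta integral in terms of the Gamma function. -/
lemma real_beta_integral (a b : ℝ) (ha : 0 < a) (hb : 0 < b) :
    ∫ x in Set.Ioo (0 : ℝ) 1, x ^ (b - 1) * (1 - x) ^ (a - 1)
      = Real.Gamma b * Real.Gamma a / Real.Gamma (a + b) := by
  have key : Complex.betaIntegral (b : ℂ) (a : ℂ)
      = ((∫ x in (0:ℝ)..1, x ^ (b - 1) * (1 - x) ^ (a - 1) : ℝ) : ℂ) := by
    rw [← intervalIntegral.integral_ofReal]
    apply intervalIntegral.integral_congr
    intro x hx
    rw [Set.uIcc_of_le (by norm_num : (0:ℝ) ≤ 1)] at hx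
    push_cast [Complex.ofReal_cpow hx.1, Complex.ofReal_cpow (by linarith [hx.2] : (0:ℝ) ≤ 1 - x)]
    ring
  have hG := Complex.Gamma_mul_Gamma_eq_betaIntegral
      (by simpa using hb : 0 < (b:ℂ).re) (by simpa using ha : 0 < (a:ℂ).re)
  rw [key] at hG
  have hba : ((b : ℂ) + a) = ((b + a : ℝ) : ℂ) := by push_cast; ring
  rw [hba, Complex.Gamma_ofReal, Complex.Gamma_ofReal, Complex.Gamma_ofReal,
    ← Complex.ofReal_mul, ← Complex.ofReal_mul] at hG
  have hR : Real.Gamma b * Real.Gamma a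
      = Real.Gamma (b + a) * ∫ x in (0:ℝ)..1, x ^ (b - 1) * (1 - x) ^ (a - 1) := by
    exact_mod_cast hG
  have hGpos : 0 < Real.Gamma (a + b) := Real.Gamma_pos_of_pos (by linarith)
  rw [intervalIntegral.integral_of_le (by norm_num : (0:ℝ) ≤ 1),
    MeasureTheory.integral_Ioc_eq_integral_Ioo] at hR
  rw [add_comm a b] at hGpos ⊢
  field_simp
  linarith [hR]

theorem tpb_integral_eq_one (a b φ : ℝ) (ha : 0 < a) (hb : 0 < b) (hφ : 0 < φ) :
    ∫ x in Set.Ioo (0 : ℝ) 1, tpb a b φ x = 1 := by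
  set f : ℝ → ℝ := fun x => φ * x / (1 + (φ - 1) * x) with hf_def
  set f' : ℝ → ℝ := fun x => φ / (1 + (φ - 1) * x) ^ 2 with hf'_def
  have hD : ∀ x : ℝ, x ∈ Set.Ioo (0:ℝ) 1 → 0 < 1 + (φ - 1) * x := by
    intro x hx
    nlinarith [hx.1, hx.2]
  -- derivative
  have hderiv : ∀ x ∈ Set.Ioo (0:ℝ) 1,
      HasDerivWithinAt f (f' x) (Set.Ioo (0:ℝ) 1) x := by
    intro x hx
    have hDx := hD x hx
    have h1 : HasDerivAt (fun x : ℝ => φ * x) φ x := by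
      simpa using (hasDerivAt_id x).const_mul φ
    have h2 : HasDerivAt (fun x : ℝ => 1 + (φ - 1) * x) (φ - 1) x := by
      simpa using ((hasDerivAt_id x).const_mul (φ - 1)).const_add 1
    have h3 := h1.div h2 (ne_of_gt hDx)
    have heq : (φ * (1 + (φ - 1) * x) - φ * x * (φ - 1)) / (1 + (φ - 1) * x) ^ 2
        = f' x := by
      rw [hf'_def]; ring_nf
    rw [heq] at h3
    exact h3.hasDerivWithinAt
  -- injectivity
  have hinj : Set.InjOn f (Set.Ioo (0:ℝ) 1) := by
    intro x hx y hy hxy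
    have hDx := hD x hx
    have hDy := hD y hy
    rw [hf_def] at hxy
    simp only at hxy
    rw [div_eq_div_iff (ne_of_gt hDx) (ne_of_gt hDy)] at hxy
    nlinarith [hxy]
  -- image
  have himg : f '' Set.Ioo (0:ℝ) 1 = Set.Ioo (0:ℝ) 1 := by
    ext u
    constructor
    · rintro ⟨x, hx, rfl⟩
      have hDx := hD x hx
      constructor
      · exact div_pos (mul_pos hφ hx.1) hDx
      · rw [hf_def]
        simp only
        rw [div_lt_one hDx]
        nlinarith [hx.2]
    · intro hu
      have hE : 0 < φ - (φ - 1) * u := by nlinarith [hu.1, hu.2]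
      refine ⟨u / (φ - (φ - 1) * u), ⟨div_pos hu.1 hE, ?_⟩, ?_⟩
      · rw [div_lt_one hE]; nlinarith [hu.2]
      · rw [hf_def]
        simp only
        rw [div_eq_iff]
        · have hE' := hE.ne'
          rw [mul_div_assoc', mul_div_assoc', one_add_div hE', mul_div_assoc', eq_div_iff hE', div_mul_cancel₀ _ hE']
          ring
        · have : 1 + (φ - 1) * (u / (φ - (φ - 1) * u)) = φ / (φ - (φ - 1) * u) := by
            field_simp
            ring
          rw [this]
          positivity
  -- change of variables
  have hcv := integral_image_eq_integral_abs_deriv_smul measurableSet_Ioo hderiv hinj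
    (fun u => u ^ (b - 1) * (1 - u) ^ (a - 1))
  rw [himg] at hcv
  -- pointwise identification of the transformed integrand
  have hpt : ∀ x ∈ Set.Ioo (0:ℝ) 1,
      |f' x| • (f x ^ (b - 1) * (1 - f x) ^ (a - 1))
        = φ ^ b * x ^ (b - 1) * (1 - x) ^ (a - 1) * (1 + (φ - 1) * x) ^ (-(a + b)) := by
    intro x hx
    have hDx := hD x hx
    have hx0 := hx.1
    have hx1 : 0 < 1 - x := by linarith [hx.2]
    have h1f : 1 - f x = (1 - x) / (1 + (φ - 1) * x) := by
      have hDx' := hDx.ne'; rw [hf_def]; simp only; rw [eq_div_iff hDx', sub_mul, div_mul_cancel₀ _ hDx']; ring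
    have hfx : f x = φ * x / (1 + (φ - 1) * x) := rfl
    have habs : |f' x| = φ / (1 + (φ - 1) * x) ^ 2 := by
      rw [hf'_def, abs_of_pos (by positivity)]
    rw [smul_eq_mul, habs, hfx, h1f,
      Real.div_rpow (mul_pos hφ hx0).le hDx.le,
      Real.div_rpow hx1.le hDx.le,
      Real.mul_rpow hφ.le hx0.le,
      Real.rpow_neg hDx.le, Real.rpow_add hDx,
      Real.rpow_sub hDx b 1, Real.rpow_sub hDx a 1, Real.rpow_one]
    have ha' : (1 + (φ - 1) * x) ^ a ≠ 0 := ne_of_gt (Real.rpow_pos_of_pos hDx a)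
    have hb' : (1 + (φ - 1) * x) ^ b ≠ 0 := ne_of_gt (Real.rpow_pos_of_pos hDx b)
    have hφb : φ ^ b = φ ^ (b - 1) * φ := by
      rw [← Real.rpow_add_one (ne_of_gt hφ)]; ring_nf
    rw [hφb]
    field_simp
  have hint : ∫ x in Set.Ioo (0:ℝ) 1,
      φ ^ b * x ^ (b - 1) * (1 - x) ^ (a - 1) * (1 + (φ - 1) * x) ^ (-(a + b))
        = Real.Gamma b * Real.Gamma a / Real.Gamma (a + b) := by
    rw [← real_beta_integral a b ha hb, hcv]
    exact (setIntegral_congr_fun measurableSet_Ioo hpt).symm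
  have hGa : Real.Gamma a ≠ 0 := ne_of_gt (Real.Gamma_pos_of_pos ha)
  have hGb : Real.Gamma b ≠ 0 := ne_of_gt (Real.Gamma_pos_of_pos hb)
  have hGab : Real.Gamma (a + b) ≠ 0 := ne_of_gt (Real.Gamma_pos_of_pos (by linarith))
  calc ∫ x in Set.Ioo (0:ℝ) 1, tpb a b φ x
      = (Real.Gamma (a + b) / (Real.Gamma a * Real.Gamma b)) *
        ∫ x in Set.Ioo (0:ℝ) 1,
          φ ^ b * x ^ (b - 1) * (1 - x) ^ (a - 1) * (1 + (φ - 1) * x) ^ (-(a + b)) := by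
        rw [← integral_const_mul]
        apply setIntegral_congr_fun measurableSet_Ioo
        intro x _
        unfold tpb
        ring
    _ = 1 := by
        rw [hint]
        field_simp
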